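/- Fix s > 0, ξ ∈ ℝ, γ = 0 and μ = 1. Define N(ε) = (1/2) Σ_{v ∈ {−1,1}} [1/(−λ_ε(v)(ν_ε(v) − λ_ε(v) − 2)) + 1/(ν_ε(v)(ν_ε(v) − λ_ε(v) − 2))] and D(ε) = 1 − (1/2) Σ_{v ∈ {−1,1}} 1/(−λ_ε(v)(ν_ε(v) − λ_ε(v) − 2)). Then for all sufficiently small ε > 0 one has D(ε) ≠ 0, and ε² · N(ε)/D(ε) → 1/(s + ((15 + 7√5)/10) ξ²) as ε → 0⁺. -/

import Mathlib

open Filter Complex Topology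

noncomputable def csqrt (z : ℂ) : ℂ := Complex.exp (((1/2 : ℝ) : ℂ) * Complex.log z)

lemma csqrt_sq {z : ℂ} (hz : z ≠ 0) : csqrt z ^ 2 = z := by
  have h : csqrt z ^ 2 = Complex.exp (((1/2:ℝ):ℂ) * Complex.log z + ((1/2:ℝ):ℂ) * Complex.log z) := by
    rw [Complex.exp_add]; ring_nf; rfl
  rw [h]
  have h2 : ((1/2:ℝ):ℂ) * Complex.log z + ((1/2:ℝ):ℂ) * Complex.log z = Complex.log z := by
    push_cast; ring
  rw [h2, Complex.exp_log hz]

lemma csqrt_re_nonneg (z : ℂ) : 0 ≤ (csqrt z).re := by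
  rw [csqrt, Complex.exp_re]
  apply mul_nonneg (Real.exp_nonneg _)
  have him : (((1/2:ℝ):ℂ) * Complex.log z).im = (1/2) * z.arg := by
    rw [Complex.im_ofReal_mul, Complex.log_im]
  rw [him]
  apply Real.cos_nonneg_of_mem_Icc
  constructor
  · have := Complex.neg_pi_lt_arg z; linarith
  · have := Complex.arg_le_pi z; linarith

lemma csqrt_re_sq {z : ℂ} (hz : z ≠ 0) : (csqrt z).re ^ 2 = z.re + (csqrt z).im ^ 2 := by
  have h := congrArg Complex.re (csqrt_sq hz)
  rw [pow_two, Complex.mul_re] at h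
  nlinarith [h]

lemma csqrt_re_gt {z : ℂ} {t : ℝ} (ht : 0 ≤ t) (h : t ^ 2 < z.re) : t < (csqrt z).re := by
  have hz : z ≠ 0 := by
    intro h0; rw [h0] at h; simp at h; nlinarith [sq_nonneg t]
  have h1 := csqrt_re_sq hz
  have h2 := csqrt_re_nonneg z
  nlinarith [sq_nonneg (csqrt z).im]

lemma ne_zero_of_re_pos' {z : ℂ} (h : 0 < z.re) : z ≠ 0 := by
  intro h0; rw [h0] at h; simp at h

noncomputable def Pf (w : ℂ) : ℂ := csqrt (5 + 4*w)
noncomputable def Qf (w : ℂ) : ℂ := csqrt (1 + 4*w)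
noncomputable def gf (w : ℂ) : ℂ :=
  4*(Pf w + Qf w + 2) / ((Qf w + 1) * (Pf w + 1) * (Pf w + Qf w - 2))
noncomputable def hf (w : ℂ) : ℂ := 4 / ((Qf w + 1) * (Pf w + Qf w - 2))

lemma Pf_sq {w : ℂ} (hw : 0 ≤ w.re) : Pf w ^ 2 = 5 + 4*w := by
  apply csqrt_sq; apply ne_zero_of_re_pos'; simp; linarith

lemma Qf_sq {w : ℂ} (hw : 0 ≤ w.re) : Qf w ^ 2 = 1 + 4*w := by
  apply csqrt_sq; apply ne_zero_of_re_pos'; simp; linarith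

lemma Pf_re {w : ℂ} (hw : 0 ≤ w.re) : 2 < (Pf w).re := by
  apply csqrt_re_gt (by norm_num); simp; linarith

lemma Qf_re {w : ℂ} (hw : 0 < w.re) : 1 < (Qf w).re := by
  apply csqrt_re_gt (by norm_num); simp; linarith

lemma lam_root {w x : ℂ} (hw : 0 < w.re) (hx : x^2 + x - (1 + w) = 0) (hre : x.re < 0) :
    x = (-1 - Pf w)/2 := by
  have hp2 := Pf_sq hw.le
  have hpre := Pf_re hw.le
  have hfac : (x - (-1 + Pf w)/2) * (x - (-1 - Pf w)/2) = 0 := by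
    have h : (x - (-1 + Pf w)/2) * (x - (-1 - Pf w)/2) = x^2 + x - (1 + w) := by
      linear_combination (-(1:ℂ)/4) * hp2
    rw [h, hx]
  rcases mul_eq_zero.mp hfac with h | h
  · exfalso
    have hx2 : x = (-1 + Pf w)/2 := by linear_combination h
    have : x.re = (-1 + (Pf w).re)/2 := by rw [hx2]; simp
    linarith
  · linear_combination h

lemma nu_root {w y : ℂ} (hw : 0 < w.re) (hy : y^2 - y - w = 0) (hre : 0 < y.re) :
    y = (1 + Qf w)/2 := by
  have hq2 := Qf_sq hw.le
  have hqre := Qf_re hw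
  have hfac : (y - (1 + Qf w)/2) * (y - (1 - Qf w)/2) = 0 := by
    have h : (y - (1 + Qf w)/2) * (y - (1 - Qf w)/2) = y^2 - y - w := by
      linear_combination (-(1:ℂ)/4) * hq2
    rw [h, hy]
  rcases mul_eq_zero.mp hfac with h | h
  · linear_combination h
  · exfalso
    have hy2 : y = (1 - Qf w)/2 := by linear_combination h
    have : y.re = (1 - (Qf w).re)/2 := by rw [hy2]; simp
    linarith

lemma denoms_ne {w : ℂ} (hw : 0 < w.re) :
    Pf w + 1 ≠ 0 ∧ Qf w + 1 ≠ 0 ∧ Pf w + Qf w - 2 ≠ 0 := by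
  have hp := Pf_re hw.le
  have hq := Qf_re hw
  refine ⟨ne_zero_of_re_pos' ?_, ne_zero_of_re_pos' ?_, ne_zero_of_re_pos' ?_⟩ <;>
    simp <;> linarith

lemma idA {w : ℂ} (hw : 0 < w.re) :
    (-((-1 - Pf w)/2) * ((1 + Qf w)/2 - (-1 - Pf w)/2 - 2))⁻¹ = 1 - w * gf w := by
  obtain ⟨hp1, hq1, hpq⟩ := denoms_ne hw
  have hp2 := Pf_sq hw.le
  have hq2 := Qf_sq hw.le
  rw [gf]
  set p := Pf w; set q := Qf w
  have e1 : -((-1 - p)/2) * ((1 + q)/2 - (-1 - p)/2 - 2) = (p + 1)*(p + q - 2)/4 := by ring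
  have hC : (q + 1) * (p + 1) * (p + q - 2) ≠ 0 := mul_ne_zero (mul_ne_zero hq1 hp1) hpq
  have step : 1 - w * (4*(p + q + 2) / ((q + 1) * (p + 1) * (p + q - 2)))
      = ((q+1)*4) / ((q + 1) * (p + 1) * (p + q - 2)) := by
    rw [eq_div_iff hC, sub_mul, one_mul, mul_assoc w, div_mul_cancel₀ _ hC]
    linear_combination (q+1)*hp2 + (1+p)*hq2
  rw [e1, inv_div, step, mul_assoc, mul_div_mul_left _ _ hq1]

lemma idB {w : ℂ} (hw : 0 < w.re) :
    (((1 + Qf w)/2) * ((1 + Qf w)/2 - (-1 - Pf w)/2 - 2))⁻¹ = hf w := by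
  obtain ⟨hp1, hq1, hpq⟩ := denoms_ne hw
  rw [hf]
  set p := Pf w; set q := Qf w
  have e1 : ((1 + q)/2) * ((1 + q)/2 - (-1 - p)/2 - 2) = (q + 1)*(p + q - 2)/4 := by ring
  rw [e1, inv_div]

lemma hasDerivAt_csqrt_affine {c : ℂ} (hc : 0 < c.re) :
    HasDerivAt (fun w => csqrt (c + 4*w)) (csqrt c * 2 / c) 0 := by
  have h1 : HasDerivAt (fun w : ℂ => c + 4*w) 4 0 := by
    simpa using ((hasDerivAt_id (0:ℂ)).const_mul (4:ℂ)).const_add c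
  have h2 : HasDerivAt Complex.log c⁻¹ ((fun w : ℂ => c + 4*w) 0) := by
    simpa using Complex.hasDerivAt_log (Complex.mem_slitPlane_iff.mpr (Or.inl hc))
  have h3 := h2.comp 0 h1
  have h4 := h3.const_mul (((1/2:ℝ)):ℂ)
  have h5 := (Complex.hasDerivAt_exp
    (((1/2:ℝ):ℂ) * Complex.log ((fun w : ℂ => c + 4*w) 0))).comp 0 h4
  have hfun : (Complex.exp ∘ fun w => ((1/2:ℝ):ℂ) * (Complex.log ∘ fun w : ℂ => c + 4*w) w)
      = fun w => csqrt (c + 4*w) := by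
    funext w; simp [csqrt, Function.comp]
  rw [hfun] at h5
  refine h5.congr_deriv (Eq.symm ?_)
  beta_reduce
  rw [show c + 4*(0:ℂ) = c by ring] at *
  simp [csqrt]
  field_simp
  ring

noncomputable def sq5 : ℂ := ((Real.sqrt 5 : ℝ) : ℂ)
noncomputable def g0 : ℂ := (sq5 + 3)/2
noncomputable def Cc : ℂ := (((15 + 7*Real.sqrt 5)/10 : ℝ) : ℂ)

lemma sq5_sq : sq5 ^ 2 = 5 := by
  rw [sq5, ← Complex.ofReal_pow, Real.sq_sqrt (by norm_num : (5:ℝ) ≥ 0)]; norm_num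

lemma csqrt_five : csqrt 5 = sq5 := by
  have h2 : csqrt 5 ^ 2 = 5 := csqrt_sq (by norm_num)
  have hfac : (csqrt 5 - sq5) * (csqrt 5 + sq5) = 0 := by
    linear_combination h2 - sq5_sq
  rcases mul_eq_zero.mp hfac with h | h
  · linear_combination h
  · exfalso
    have hre := csqrt_re_nonneg (5:ℂ)
    have hval : (csqrt 5).re = -Real.sqrt 5 := by
      have h5 : csqrt 5 = -sq5 := by linear_combination h
      rw [h5]; simp [sq5]
    have h5 : 0 < Real.sqrt 5 := Real.sqrt_pos.mpr (by norm_num)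
    linarith [hval ▸ hre]

lemma csqrt_one : csqrt 1 = 1 := by
  simp [csqrt, Complex.log_one]

lemma sq5_re : sq5.re = Real.sqrt 5 := by simp [sq5]
lemma sq5_gt : 2 < Real.sqrt 5 := by
  nlinarith [Real.sq_sqrt (by norm_num : (5:ℝ) ≥ 0), Real.sqrt_nonneg 5]
lemma sq5_add_one_ne : sq5 + 1 ≠ 0 := by
  apply ne_zero_of_re_pos'; simp [sq5_re]; positivity
lemma sq5_sub_one_ne : sq5 - 1 ≠ 0 := by
  apply ne_zero_of_re_pos'
  simp only [Complex.sub_re, Complex.one_re, sq5_re]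
  linarith [sq5_gt]

lemma Pf_zero : Pf 0 = sq5 := by
  rw [Pf, show (5:ℂ) + 4*0 = 5 by ring, csqrt_five]
lemma Qf_zero : Qf 0 = 1 := by
  rw [Qf, show (1:ℂ) + 4*0 = 1 by ring, csqrt_one]

lemma hPd : HasDerivAt Pf (sq5 * 2 / 5) 0 := by
  have h := hasDerivAt_csqrt_affine (c := 5) (by norm_num)
  rw [csqrt_five] at h
  exact h
lemma hQd : HasDerivAt Qf 2 0 := by
  have h := hasDerivAt_csqrt_affine (c := 1) (by norm_num)
  rw [csqrt_one] at h
  exact (by simpa using h : HasDerivAt (fun w => csqrt (1 + 4*w)) 2 0)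

lemma den_eight : ((1:ℂ) + 1) * (sq5 + 1) * (sq5 + 1 - 2) = 8 := by
  linear_combination 2*sq5_sq

lemma gf_zero : gf 0 = g0 := by
  rw [gf, Pf_zero, Qf_zero, g0, den_eight]
  rw [div_eq_div_iff (by norm_num) (by norm_num : (2:ℂ) ≠ 0)]
  ring

lemma hf_zero : hf 0 = (sq5 + 1)/2 := by
  rw [hf, Pf_zero, Qf_zero]
  have hne : ((1:ℂ)+1) * (sq5 + 1 - 2) ≠ 0 := by
    rw [show sq5 + 1 - 2 = sq5 - 1 by ring]
    exact mul_ne_zero (by norm_num) sq5_sub_one_ne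
  rw [div_eq_div_iff hne (by norm_num : (2:ℂ) ≠ 0)]
  linear_combination (-2:ℂ)*sq5_sq

lemma den_zero_ne : ((Qf 0 + 1) * (Pf 0 + 1) * (Pf 0 + Qf 0 - 2)) ≠ 0 := by
  rw [Pf_zero, Qf_zero, den_eight]
  norm_num

lemma hgd : HasDerivAt gf (-(Cc * g0)) 0 := by
  have hu1 : HasDerivAt (fun w => Qf w + 1) 2 0 := hQd.add_const 1
  have hu2 : HasDerivAt (fun w => Pf w + 1) (sq5 * 2/5) 0 := hPd.add_const 1
  have hu3 : HasDerivAt (fun w => Pf w + Qf w - 2) (sq5 * 2/5 + 2) 0 := (hPd.add hQd).sub_const 2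
  have hnum : HasDerivAt (fun w => 4*(Pf w + Qf w + 2)) (4*(sq5 * 2/5 + 2)) 0 := by
    simpa using ((hPd.add hQd).add_const 2).const_mul (4:ℂ)
  have hden := (hu1.mul hu2).mul hu3
  have hgf' : HasDerivAt gf _ 0 := hnum.div hden den_zero_ne
  convert hgf' using 1
  simp only [Pi.mul_apply, Pf_zero, Qf_zero]
  rw [show Cc = (15 + 7*sq5)/10 by rw [Cc, sq5]; push_cast; ring]
  rw [g0]
  rw [eq_div_iff (pow_ne_zero 2 (by rw [den_eight]; norm_num :
    ((1:ℂ) + 1) * (sq5 + 1) * (sq5 + 1 - 2) ≠ 0))]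
  linear_combination (-(7*sq5^4+36*sq5^3+66*sq5^2+52*sq5+31)/5) * sq5_sq

lemma hfc : ContinuousAt hf 0 := by
  have hc : ContinuousAt (fun w => (Qf w + 1) * (Pf w + Qf w - 2)) 0 :=
    (hQd.continuousAt.add continuousAt_const).mul
      ((hPd.continuousAt.add hQd.continuousAt).sub continuousAt_const)
  apply ContinuousAt.div continuousAt_const hc
  show (Qf 0 + 1) * (Pf 0 + Qf 0 - 2) ≠ 0
  rw [Pf_zero, Qf_zero, show sq5 + 1 - 2 = sq5 - 1 by ring]
  exact mul_ne_zero (by norm_num) sq5_sub_one_ne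

noncomputable def Wf (s ξ ε v : ℝ) : ℂ :=
  ((ε^2*s : ℝ) : ℂ) + Complex.I * (ε:ℂ) * ((ξ*v : ℝ):ℂ)

lemma Wf_re (s ξ ε v : ℝ) : (Wf s ξ ε v).re = ε^2*s := by
  simp [Wf, Complex.add_re, Complex.mul_re, Complex.I_re, Complex.I_im, ← Complex.ofReal_pow]

lemma Wf_eq (s ξ ε : ℝ) :
    Wf s ξ ε 1 = (ε:ℂ) * (((ε*s : ℝ):ℂ) + Complex.I * ((ξ:ℝ):ℂ)) ∧
    Wf s ξ ε (-1) = (ε:ℂ) * (((ε*s : ℝ):ℂ) - Complex.I * ((ξ:ℝ):ℂ)) := by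
  constructor <;> (rw [Wf]; push_cast; ring)

lemma Wf_tendsto (s ξ v : ℝ) :
    Tendsto (fun ε : ℝ => Wf s ξ ε v) (nhdsWithin 0 (Set.Ioi 0)) (𝓝 0) := by
  have hc : Continuous (fun ε : ℝ => Wf s ξ ε v) := by
    unfold Wf; fun_prop
  have h0 : Wf s ξ 0 v = 0 := by simp [Wf]
  exact (hc.tendsto' 0 0 h0).mono_left nhdsWithin_le_nhds

theorem stmt17 (s ξ γ μ : ℝ) (hs : 0 < s) (hγ : γ = 0) (hμ : μ = 1)
    (lam nu : ℝ → ℝ → ℂ)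
    (hroot : ∀ ε : ℝ, 0 < ε → ∀ v : ℝ, v = 1 ∨ v = -1 →
      (lam ε v ^ 2 + ((ε ^ γ : ℝ) : ℂ) * lam ε v
          - (((ε ^ (1 + μ) : ℝ) : ℂ) * (s : ℂ) + Complex.I * (ε : ℂ) * ((ξ * v : ℝ) : ℂ) + 1) = 0 ∧
        (lam ε v).re < 0) ∧
      (nu ε v ^ 2 - ((ε ^ γ : ℝ) : ℂ) * nu ε v
          - (((ε ^ (1 + μ) : ℝ) : ℂ) * (s : ℂ) + Complex.I * (ε : ℂ) * ((ξ * v : ℝ) : ℂ)) = 0 ∧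
        0 < (nu ε v).re)) :
    let N : ℝ → ℂ := fun ε => (1 / 2) *
      (((-lam ε 1 * (nu ε 1 - lam ε 1 - 2))⁻¹ + (nu ε 1 * (nu ε 1 - lam ε 1 - 2))⁻¹) +
        ((-lam ε (-1) * (nu ε (-1) - lam ε (-1) - 2))⁻¹ +
          (nu ε (-1) * (nu ε (-1) - lam ε (-1) - 2))⁻¹))
    let D : ℝ → ℂ := fun ε => 1 - (1 / 2) *
      ((-lam ε 1 * (nu ε 1 - lam ε 1 - 2))⁻¹ + (-lam ε (-1) * (nu ε (-1) - lam ε (-1) - 2))⁻¹)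
    (∀ᶠ ε in nhdsWithin 0 (Set.Ioi 0), D ε ≠ 0) ∧
      Tendsto (fun ε : ℝ => (ε : ℂ) ^ 2 * N ε / D ε) (nhdsWithin 0 (Set.Ioi 0))
        (nhds (((1 / (s + (15 + 7 * Real.sqrt 5) / 10 * ξ ^ 2) : ℝ)) : ℂ)) := by
  subst hγ hμ
  intro N D
  set l := nhdsWithin (0:ℝ) (Set.Ioi 0) with hldef
  have hWpos : ∀ ε : ℝ, 0 < ε → ∀ v : ℝ, 0 < (Wf s ξ ε v).re := by
    intro ε hε v; rw [Wf_re]; positivity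
  have hWne : ∀ ε : ℝ, 0 < ε → ∀ v : ℝ, Wf s ξ ε v ≠ 0 := fun ε hε v =>
    ne_zero_of_re_pos' (hWpos ε hε v)
  have hroots : ∀ ε : ℝ, 0 < ε → ∀ v : ℝ, (v = 1 ∨ v = -1) →
      lam ε v = (-1 - Pf (Wf s ξ ε v))/2 ∧ nu ε v = (1 + Qf (Wf s ξ ε v))/2 := by
    intro ε hε v hv
    obtain ⟨⟨hle, hlre⟩, hne, hnre⟩ := hroot ε hε v hv
    have h0 : ε ^ (0:ℝ) = 1 := Real.rpow_zero ε
    have h2 : ε ^ ((1:ℝ)+1) = ε^2 := by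
      rw [show (1:ℝ)+1 = ((2:ℕ):ℝ) by norm_num, Real.rpow_natCast]
    rw [h0, h2] at hle hne
    constructor
    · refine lam_root (hWpos ε hε v) ?_ hlre
      rw [Wf]; push_cast at hle ⊢; linear_combination hle
    · refine nu_root (hWpos ε hε v) ?_ hnre
      rw [Wf]; push_cast at hne ⊢; linear_combination hne
  have hDf : ∀ ε : ℝ, 0 < ε → D ε =
      (1/2) * (Wf s ξ ε 1 * gf (Wf s ξ ε 1) + Wf s ξ ε (-1) * gf (Wf s ξ ε (-1))) := by
    intro ε hε
    obtain ⟨hl1, hn1⟩ := hroots ε hε 1 (Or.inl rfl)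
    obtain ⟨hl2, hn2⟩ := hroots ε hε (-1) (Or.inr rfl)
    show (1:ℂ) - (1/2) * _ = _
    rw [hl1, hn1, hl2, hn2, idA (hWpos ε hε 1), idA (hWpos ε hε (-1))]
    ring
  have hNf : ∀ ε : ℝ, 0 < ε → N ε =
      (1/2) * (((1 - Wf s ξ ε 1 * gf (Wf s ξ ε 1)) + hf (Wf s ξ ε 1)) +
        ((1 - Wf s ξ ε (-1) * gf (Wf s ξ ε (-1))) + hf (Wf s ξ ε (-1)))) := by
    intro ε hε
    obtain ⟨hl1, hn1⟩ := hroots ε hε 1 (Or.inl rfl)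
    obtain ⟨hl2, hn2⟩ := hroots ε hε (-1) (Or.inr rfl)
    show (1:ℂ)/2 * _ = _
    rw [hl1, hn1, hl2, hn2, idA (hWpos ε hε 1), idA (hWpos ε hε (-1)),
      idB (hWpos ε hε 1), idB (hWpos ε hε (-1))]
  -- slope limits
  have hSl : ∀ v : ℝ, Tendsto (fun ε : ℝ => (gf (Wf s ξ ε v) - g0) / Wf s ξ ε v) l
      (𝓝 (-(Cc * g0))) := by
    intro v
    have hslope := hasDerivAt_iff_tendsto_slope.mp hgd
    have hWt : Tendsto (fun ε : ℝ => Wf s ξ ε v) l (𝓝[≠] (0:ℂ)) := by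
      rw [tendsto_nhdsWithin_iff]
      refine ⟨Wf_tendsto s ξ v, ?_⟩
      filter_upwards [eventually_mem_nhdsWithin] with ε hε
      exact hWne ε hε v
    refine (hslope.comp hWt).congr (fun ε => ?_)
    simp only [Function.comp, slope_def_field, gf_zero, sub_zero]
  -- N limit
  have hgW : ∀ v : ℝ, Tendsto (fun ε : ℝ => gf (Wf s ξ ε v)) l (𝓝 g0) := by
    intro v
    have h := hgd.continuousAt.tendsto.comp (Wf_tendsto s ξ v)
    rwa [gf_zero] at h
  have hhW : ∀ v : ℝ, Tendsto (fun ε : ℝ => hf (Wf s ξ ε v)) l (𝓝 ((sq5+1)/2)) := by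
    intro v
    have h := hfc.tendsto.comp (Wf_tendsto s ξ v)
    rwa [hf_zero] at h
  have hNt : Tendsto N l (𝓝 g0) := by
    have h1 : Tendsto (fun ε : ℝ => (1:ℂ)/2 *
        (((1 - Wf s ξ ε 1 * gf (Wf s ξ ε 1)) + hf (Wf s ξ ε 1)) +
          ((1 - Wf s ξ ε (-1) * gf (Wf s ξ ε (-1))) + hf (Wf s ξ ε (-1))))) l
        (𝓝 ((1:ℂ)/2 * (((1 - 0*g0) + (sq5+1)/2) + ((1 - 0*g0) + (sq5+1)/2)))) :=
      Tendsto.const_mul _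
        (((tendsto_const_nhds.sub ((Wf_tendsto s ξ 1).mul (hgW 1))).add (hhW 1)).add
          ((tendsto_const_nhds.sub ((Wf_tendsto s ξ (-1)).mul (hgW (-1)))).add (hhW (-1))))
    have he : (1:ℂ)/2 * (((1 - 0*g0) + (sq5+1)/2) + ((1 - 0*g0) + (sq5+1)/2)) = g0 := by
      rw [g0]; ring
    rw [he] at h1
    apply h1.congr'
    filter_upwards [eventually_mem_nhdsWithin] with ε hε
    exact (hNf ε hε).symm
  -- Φ and its limit
  set k : ℂ := -(Cc * g0) with hkdef
  set Φ : ℝ → ℂ := fun ε => (s:ℂ)*g0 + (1/2)*(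
      (((ε*s : ℝ):ℂ) + Complex.I*((ξ:ℝ):ℂ))^2 * ((gf (Wf s ξ ε 1) - g0)/Wf s ξ ε 1)
    + (((ε*s : ℝ):ℂ) - Complex.I*((ξ:ℝ):ℂ))^2 * ((gf (Wf s ξ ε (-1)) - g0)/Wf s ξ ε (-1)))
    with hΦdef
  have hat : Tendsto (fun ε : ℝ => (((ε*s : ℝ):ℂ) + Complex.I*((ξ:ℝ):ℂ))) l
      (𝓝 (Complex.I*((ξ:ℝ):ℂ))) := by
    have hc : Continuous (fun ε : ℝ => (((ε*s : ℝ):ℂ) + Complex.I*((ξ:ℝ):ℂ))) := by fun_prop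
    exact (hc.tendsto' 0 _ (by norm_num)).mono_left nhdsWithin_le_nhds
  have hbt : Tendsto (fun ε : ℝ => (((ε*s : ℝ):ℂ) - Complex.I*((ξ:ℝ):ℂ))) l
      (𝓝 (-(Complex.I*((ξ:ℝ):ℂ)))) := by
    have hc : Continuous (fun ε : ℝ => (((ε*s : ℝ):ℂ) - Complex.I*((ξ:ℝ):ℂ))) := by fun_prop
    exact (hc.tendsto' 0 _ (by norm_num)).mono_left nhdsWithin_le_nhds
  have hΦt : Tendsto Φ l (𝓝 ((s:ℂ)*g0 + (1/2)*((Complex.I*((ξ:ℝ):ℂ))^2*k +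
      (-(Complex.I*((ξ:ℝ):ℂ)))^2*k))) := by
    rw [hΦdef]
    exact tendsto_const_nhds.add (Tendsto.const_mul _
      (((hat.pow 2).mul (hSl 1)).add ((hbt.pow 2).mul (hSl (-1)))))
  have hΛeq : (s:ℂ)*g0 + (1/2)*((Complex.I*((ξ:ℝ):ℂ))^2*k + (-(Complex.I*((ξ:ℝ):ℂ)))^2*k)
      = g0*((s:ℂ) + Cc*((ξ:ℝ):ℂ)^2) := by
    rw [hkdef]
    linear_combination (-(Cc*g0*((ξ:ℝ):ℂ)^2)) * Complex.I_sq
  rw [hΛeq] at hΦt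
  have hg0r : g0 = (((Real.sqrt 5 + 3)/2 : ℝ) : ℂ) := by
    rw [g0, sq5]; push_cast; ring
  have hg0ne : g0 ≠ 0 := by
    rw [hg0r]
    exact Complex.ofReal_ne_zero.mpr (by positivity)
  have hsum : ((s:ℂ) + Cc*((ξ:ℝ):ℂ)^2)
      = (((s + (15 + 7*Real.sqrt 5)/10*ξ^2 : ℝ)):ℂ) := by
    rw [Cc]; push_cast; ring
  have hsumne : ((s:ℂ) + Cc*((ξ:ℝ):ℂ)^2) ≠ 0 := by
    rw [hsum]
    have h5 : (0:ℝ) < Real.sqrt 5 := Real.sqrt_pos.mpr (by norm_num)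
    exact Complex.ofReal_ne_zero.mpr (by positivity)
  have hΛne : g0*((s:ℂ) + Cc*((ξ:ℝ):ℂ)^2) ≠ 0 := mul_ne_zero hg0ne hsumne
  -- D = ε² Φ
  have hDeq : ∀ ε : ℝ, 0 < ε → D ε = (ε:ℂ)^2 * Φ ε := by
    intro ε hε
    obtain ⟨ha, hb⟩ := Wf_eq s ξ ε
    have hW1 := hWne ε hε 1
    have hW2 := hWne ε hε (-1)
    rw [hDf ε hε, hΦdef]
    simp only
    set G1 := gf (Wf s ξ ε 1) with hG1
    set G2 := gf (Wf s ξ ε (-1)) with hG2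
    set T1 := (G1 - g0) / Wf s ξ ε 1 with hT1
    set T2 := (G2 - g0) / Wf s ξ ε (-1) with hT2
    set a : ℂ := ((ε*s : ℝ):ℂ) + Complex.I*((ξ:ℝ):ℂ) with haa
    set b : ℂ := ((ε*s : ℝ):ℂ) - Complex.I*((ξ:ℝ):ℂ) with hbb
    have h1 : T1 * Wf s ξ ε 1 = G1 - g0 := by
      rw [hT1]; exact div_mul_cancel₀ _ hW1
    have h2 : T2 * Wf s ξ ε (-1) = G2 - g0 := by
      rw [hT2]; exact div_mul_cancel₀ _ hW2
    have hab : a + b = 2*((ε:ℂ)*(s:ℂ)) := by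
      rw [haa, hbb]; push_cast; ring
    rw [ha] at h1
    rw [hb] at h2
    rw [ha, hb]
    linear_combination (-((ε:ℂ)*a)/2)*h1 + (-((ε:ℂ)*b)/2)*h2 + (((ε:ℂ)*g0)/2)*hab
  have hΦne : ∀ᶠ ε in l, Φ ε ≠ 0 := hΦt.eventually_ne hΛne
  constructor
  · filter_upwards [hΦne, eventually_mem_nhdsWithin] with ε hΦε hε
    rw [hDeq ε hε]
    exact mul_ne_zero (pow_ne_zero 2 (Complex.ofReal_ne_zero.mpr (ne_of_gt hε))) hΦε
  · have htend : Tendsto (fun ε : ℝ => N ε / Φ ε) l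
        (𝓝 (g0 / (g0*((s:ℂ) + Cc*((ξ:ℝ):ℂ)^2)))) := hNt.div hΦt hΛne
    have hval : g0 / (g0*((s:ℂ) + Cc*((ξ:ℝ):ℂ)^2))
        = (((1 / (s + (15 + 7 * Real.sqrt 5) / 10 * ξ ^ 2) : ℝ)) : ℂ) := by
      rw [div_mul_cancel_left₀ hg0ne, hsum, ← Complex.ofReal_inv]
      norm_num
    rw [hval] at htend
    apply htend.congr'
    filter_upwards [hΦne, eventually_mem_nhdsWithin] with ε hΦε hε
    rw [hDeq ε hε, mul_div_mul_left _ _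
      (pow_ne_zero 2 (Complex.ofReal_ne_zero.mpr (ne_of_gt hε)))]
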